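/- For k a smooth positive function of one variable, ∫_{ℝ²} b₂(ξ) dξ₁dξ₂ = −(π/3)(δ₁k)²/k³ + (π/6)(δ₁₁k)/k², where b₂(ξ) is the commutative (θ=0) symbol given by b₂ = 48b₀⁵k⁶(δ₂k)²ξ₂⁶ + 48b₀⁵k²(δ₁k)²ξ₁²ξ₂⁴ − 8b₀⁴k⁵(δ₂₂k)ξ₂⁴ − 56b₀⁴k⁴(δ₂k)²ξ₂⁴ − 8b₀⁴k²(δ₁k)²ξ₂⁴ − 8b₀⁴k(δ₁₁k)ξ₁²ξ₂² − 8b₀⁴(δ₁k)²ξ₁²ξ₂² + 6b₀³k³(δ₂₂k)ξ₂² + 14b₀³k²(δ₂k)²ξ₂² + 2b₀³k(δ₁₁k)ξ₂² + b₀³(δ₁k)²ξ₂² − (1/2)b₀²k(δ₂₂k) − (1/4)b₀²(δ₂k)², with b₀ = (1 + ξ₁² + k²ξ₂²)⁻¹. -/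

import Mathlib

open Real MeasureTheory

open Filter Set Topology

/-- 1-D integrability of `t^(2b) (1+t²)^(-n)` when `b+1 ≤ n`. -/
lemma integrable1 (b n : ℕ) (h : b + 1 ≤ n) :
    Integrable (fun t : ℝ => t ^ (2 * b) * ((1 + t ^ 2)⁻¹) ^ n) := by
  have hc : Continuous (fun t : ℝ => t ^ (2 * b) * ((1 + t ^ 2)⁻¹) ^ n) := by
    refine (continuous_pow _).mul (Continuous.pow ?_ _)
    exact ((continuous_const.add (continuous_pow 2)).inv₀ (fun t => (add_pos_of_pos_of_nonneg one_pos (sq_nonneg t)).ne'))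
  refine integrable_inv_one_add_sq.mono hc.aestronglyMeasurable (.of_forall fun t => ?_)
  have h1 : (0:ℝ) < 1 + t ^ 2 := by positivity
  have h0 : ((1:ℝ) + t ^ 2)⁻¹ ≠ 0 := by positivity
  rw [Real.norm_eq_abs, Real.norm_eq_abs, abs_of_nonneg (mul_nonneg (by rw [pow_mul]; positivity) (by positivity)),
    abs_of_nonneg (by positivity)]
  calc t ^ (2 * b) * ((1 + t ^ 2)⁻¹) ^ n
      ≤ (1 + t ^ 2) ^ b * ((1 + t ^ 2)⁻¹) ^ n := by
        gcongr
        rw [pow_mul]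
        exact pow_le_pow_left₀ (sq_nonneg t) (by nlinarith) b
    _ = ((1 + t ^ 2)⁻¹) ^ (n - b) := by
        rw [pow_sub₀ _ h0 (by omega : b ≤ n), inv_pow, inv_pow, inv_inv]; ring
    _ ≤ ((1 + t ^ 2)⁻¹) ^ 1 := by
        apply pow_le_pow_of_le_one (by positivity) _ (by omega)
        rw [inv_le_one_iff₀]; right; nlinarith
    _ = (1 + t ^ 2)⁻¹ := pow_one _

lemma tendsto_top_aux (j : ℕ) (hj : 1 ≤ j) :
    Tendsto (fun u : ℝ => u * ((1 + u ^ 2)⁻¹) ^ j) atTop (𝓝 0) := by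
  apply tendsto_of_tendsto_of_tendsto_of_le_of_le' tendsto_const_nhds tendsto_inv_atTop_zero
  · filter_upwards [eventually_ge_atTop (1:ℝ)] with u hu
    positivity
  · filter_upwards [eventually_ge_atTop (1:ℝ)] with u hu
    have h1 : (0:ℝ) < 1 + u ^ 2 := by positivity
    have hA1 : ((1:ℝ) + u ^ 2)⁻¹ ≤ 1 := by
      rw [inv_le_one_iff₀]; right; nlinarith
    calc u * ((1 + u ^ 2)⁻¹) ^ j ≤ u * ((1 + u ^ 2)⁻¹) ^ 1 :=
          mul_le_mul_of_nonneg_left (pow_le_pow_of_le_one (by positivity) hA1 hj) (by linarith)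
      _ ≤ u⁻¹ := by
          rw [pow_one, mul_inv_le_iff₀ h1, inv_mul_eq_div, le_div_iff₀ (by linarith : (0:ℝ) < u)]
          nlinarith

lemma tendsto_bot_aux (j : ℕ) (hj : 1 ≤ j) :
    Tendsto (fun u : ℝ => u * ((1 + u ^ 2)⁻¹) ^ j) atBot (𝓝 0) := by
  have h := ((tendsto_top_aux j hj).comp tendsto_neg_atBot_atTop).neg
  rw [neg_zero] at h
  refine h.congr fun u => ?_
  simp only [Function.comp_apply]
  ring

lemma tendsto_sqrt_top : Tendsto (fun u : ℝ => u * (Real.sqrt (1 + u ^ 2))⁻¹) atTop (𝓝 1) := by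
  have h1 : Tendsto (fun u : ℝ => (u ^ 2)⁻¹ + 1) atTop (𝓝 (0 ^ 2 + 1)) :=
    (((tendsto_inv_atTop_zero).pow 2).congr (fun u => by rw [inv_pow])).add tendsto_const_nhds
  norm_num at h1
  have h3 := (Real.continuous_sqrt.tendsto 1).comp h1
  rw [Real.sqrt_one] at h3
  have h4 := h3.inv₀ one_ne_zero
  rw [inv_one] at h4
  have h2 : Tendsto (fun u : ℝ => (Real.sqrt ((u ^ 2)⁻¹ + 1))⁻¹) atTop (𝓝 1) := by
    simpa [Function.comp_def] using h4
  refine h2.congr' ?_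
  filter_upwards [eventually_gt_atTop (0:ℝ)] with u hu
  have hs : Real.sqrt (1 + u ^ 2) = u * Real.sqrt ((u ^ 2)⁻¹ + 1) := by
    rw [show (1:ℝ) + u ^ 2 = u ^ 2 * ((u ^ 2)⁻¹ + 1) by field_simp,
      Real.sqrt_mul (sq_nonneg u), Real.sqrt_sq hu.le]
  rw [hs, mul_inv, ← mul_assoc, mul_inv_cancel₀ (ne_of_gt hu), one_mul]

lemma tendsto_sqrt_bot : Tendsto (fun u : ℝ => u * (Real.sqrt (1 + u ^ 2))⁻¹) atBot (𝓝 (-1)) := by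
  have h := (tendsto_sqrt_top.comp tendsto_neg_atBot_atTop).neg
  rw [show -(1:ℝ) = -1 from rfl] at h
  refine h.congr fun u => ?_
  simp only [Function.comp_apply, neg_sq]
  ring

lemma hasDerivAt_ratpart (j : ℕ) (u : ℝ) :
    HasDerivAt (fun u : ℝ => u * ((1 + u ^ 2)⁻¹) ^ j)
      (1 * ((1 + u ^ 2)⁻¹) ^ j +
        u * ((j : ℝ) * ((1 + u ^ 2)⁻¹) ^ (j - 1) * (-(2 * u) * ((1 + u ^ 2)⁻¹) ^ 2))) u := by
  have h1 : HasDerivAt (fun u : ℝ => 1 + u ^ 2) (2 * u) u := by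
    simpa using (hasDerivAt_pow 2 u).const_add 1
  have h2 := h1.inv (by positivity)
  have h2' : HasDerivAt (fun u : ℝ => (1 + u ^ 2)⁻¹) (-(2 * u) * ((1 + u ^ 2)⁻¹) ^ 2) u := by
    refine h2.congr_deriv (Eq.symm ?_)
    rw [inv_pow]
    ring
  exact (hasDerivAt_id' u).mul (h2'.pow j)

lemma integral_eq_of_antideriv (F : ℝ → ℝ) (n : ℕ) (hn : 1 ≤ n)
    (hF : ∀ u, HasDerivAt F (((1 + u ^ 2)⁻¹) ^ n) u) (a b : ℝ)
    (hbot : Tendsto F atBot (𝓝 a)) (htop : Tendsto F atTop (𝓝 b)) :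
    ∫ u : ℝ, ((1 + u ^ 2)⁻¹) ^ n = b - a :=
  integral_of_hasDerivAt_of_tendsto hF (by simpa using integrable1 0 n hn) hbot htop

lemma Cval2 : ∫ u : ℝ, ((1 + u ^ 2)⁻¹) ^ 2 = π / 2 := by
  have key : ∀ u : ℝ, HasDerivAt (fun u : ℝ => (1 / 2 : ℝ) * arctan u + ((1 / 2 : ℝ) * (u * ((1 + u ^ 2)⁻¹) ^ 1)))
      (((1 + u ^ 2)⁻¹) ^ 2) u := by
    intro u
    have h0 : (1 : ℝ) + u ^ 2 ≠ 0 := by positivity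
    have h := ((hasDerivAt_arctan' u).const_mul (1 / 2 : ℝ)).add
      (((hasDerivAt_ratpart 1 u).const_mul (1 / 2 : ℝ)))
    refine h.congr_deriv (Eq.symm ?_)
    simp only [Nat.cast_ofNat, Nat.cast_one, Nat.reduceSub, pow_zero, pow_one, mul_one, one_mul]
    field_simp
    ring
  have htop : Tendsto (fun u : ℝ => (1 / 2 : ℝ) * arctan u + ((1 / 2 : ℝ) * (u * ((1 + u ^ 2)⁻¹) ^ 1))) atTop
      (𝓝 ((1 / 2 : ℝ) * (π / 2) + ((1 / 2 : ℝ) * 0))) :=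
    ((tendsto_nhds_of_tendsto_nhdsWithin tendsto_arctan_atTop).const_mul _).add
      (((tendsto_top_aux 1 (by norm_num)).const_mul (1 / 2 : ℝ)))
  have hbot : Tendsto (fun u : ℝ => (1 / 2 : ℝ) * arctan u + ((1 / 2 : ℝ) * (u * ((1 + u ^ 2)⁻¹) ^ 1))) atBot
      (𝓝 ((1 / 2 : ℝ) * (-(π / 2)) + ((1 / 2 : ℝ) * 0))) :=
    ((tendsto_nhds_of_tendsto_nhdsWithin tendsto_arctan_atBot).const_mul _).add
      (((tendsto_bot_aux 1 (by norm_num)).const_mul (1 / 2 : ℝ)))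
  rw [integral_eq_of_antideriv _ 2 (by norm_num) key _ _ hbot htop]
  ring


lemma Cval3 : ∫ u : ℝ, ((1 + u ^ 2)⁻¹) ^ 3 = 3 * π / 8 := by
  have key : ∀ u : ℝ, HasDerivAt (fun u : ℝ => (3 / 8 : ℝ) * arctan u + ((3 / 8 : ℝ) * (u * ((1 + u ^ 2)⁻¹) ^ 1) + (1 / 4 : ℝ) * (u * ((1 + u ^ 2)⁻¹) ^ 2)))
      (((1 + u ^ 2)⁻¹) ^ 3) u := by
    intro u
    have h0 : (1 : ℝ) + u ^ 2 ≠ 0 := by positivity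
    have h := ((hasDerivAt_arctan' u).const_mul (3 / 8 : ℝ)).add
      (((hasDerivAt_ratpart 1 u).const_mul (3 / 8 : ℝ)) |>.add ((hasDerivAt_ratpart 2 u).const_mul (1 / 4 : ℝ)))
    refine h.congr_deriv (Eq.symm ?_)
    simp only [Nat.cast_ofNat, Nat.cast_one, Nat.reduceSub, pow_zero, pow_one, mul_one, one_mul]
    field_simp
    ring
  have htop : Tendsto (fun u : ℝ => (3 / 8 : ℝ) * arctan u + ((3 / 8 : ℝ) * (u * ((1 + u ^ 2)⁻¹) ^ 1) + (1 / 4 : ℝ) * (u * ((1 + u ^ 2)⁻¹) ^ 2))) atTop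
      (𝓝 ((3 / 8 : ℝ) * (π / 2) + ((3 / 8 : ℝ) * 0 + (1 / 4 : ℝ) * 0))) :=
    ((tendsto_nhds_of_tendsto_nhdsWithin tendsto_arctan_atTop).const_mul _).add
      (((tendsto_top_aux 1 (by norm_num)).const_mul (3 / 8 : ℝ)) |>.add ((tendsto_top_aux 2 (by norm_num)).const_mul (1 / 4 : ℝ)))
  have hbot : Tendsto (fun u : ℝ => (3 / 8 : ℝ) * arctan u + ((3 / 8 : ℝ) * (u * ((1 + u ^ 2)⁻¹) ^ 1) + (1 / 4 : ℝ) * (u * ((1 + u ^ 2)⁻¹) ^ 2))) atBot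
      (𝓝 ((3 / 8 : ℝ) * (-(π / 2)) + ((3 / 8 : ℝ) * 0 + (1 / 4 : ℝ) * 0))) :=
    ((tendsto_nhds_of_tendsto_nhdsWithin tendsto_arctan_atBot).const_mul _).add
      (((tendsto_bot_aux 1 (by norm_num)).const_mul (3 / 8 : ℝ)) |>.add ((tendsto_bot_aux 2 (by norm_num)).const_mul (1 / 4 : ℝ)))
  rw [integral_eq_of_antideriv _ 3 (by norm_num) key _ _ hbot htop]
  ring


lemma Cval4 : ∫ u : ℝ, ((1 + u ^ 2)⁻¹) ^ 4 = 5 * π / 16 := by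
  have key : ∀ u : ℝ, HasDerivAt (fun u : ℝ => (5 / 16 : ℝ) * arctan u + ((5 / 16 : ℝ) * (u * ((1 + u ^ 2)⁻¹) ^ 1) + (5 / 24 : ℝ) * (u * ((1 + u ^ 2)⁻¹) ^ 2) + (1 / 6 : ℝ) * (u * ((1 + u ^ 2)⁻¹) ^ 3)))
      (((1 + u ^ 2)⁻¹) ^ 4) u := by
    intro u
    have h0 : (1 : ℝ) + u ^ 2 ≠ 0 := by positivity
    have h := ((hasDerivAt_arctan' u).const_mul (5 / 16 : ℝ)).add
      (((hasDerivAt_ratpart 1 u).const_mul (5 / 16 : ℝ)) |>.add ((hasDerivAt_ratpart 2 u).const_mul (5 / 24 : ℝ)) |>.add ((hasDerivAt_ratpart 3 u).const_mul (1 / 6 : ℝ)))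
    refine h.congr_deriv (Eq.symm ?_)
    simp only [Nat.cast_ofNat, Nat.cast_one, Nat.reduceSub, pow_zero, pow_one, mul_one, one_mul]
    field_simp
    ring
  have htop : Tendsto (fun u : ℝ => (5 / 16 : ℝ) * arctan u + ((5 / 16 : ℝ) * (u * ((1 + u ^ 2)⁻¹) ^ 1) + (5 / 24 : ℝ) * (u * ((1 + u ^ 2)⁻¹) ^ 2) + (1 / 6 : ℝ) * (u * ((1 + u ^ 2)⁻¹) ^ 3))) atTop
      (𝓝 ((5 / 16 : ℝ) * (π / 2) + ((5 / 16 : ℝ) * 0 + (5 / 24 : ℝ) * 0 + (1 / 6 : ℝ) * 0))) :=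
    ((tendsto_nhds_of_tendsto_nhdsWithin tendsto_arctan_atTop).const_mul _).add
      (((tendsto_top_aux 1 (by norm_num)).const_mul (5 / 16 : ℝ)) |>.add ((tendsto_top_aux 2 (by norm_num)).const_mul (5 / 24 : ℝ)) |>.add ((tendsto_top_aux 3 (by norm_num)).const_mul (1 / 6 : ℝ)))
  have hbot : Tendsto (fun u : ℝ => (5 / 16 : ℝ) * arctan u + ((5 / 16 : ℝ) * (u * ((1 + u ^ 2)⁻¹) ^ 1) + (5 / 24 : ℝ) * (u * ((1 + u ^ 2)⁻¹) ^ 2) + (1 / 6 : ℝ) * (u * ((1 + u ^ 2)⁻¹) ^ 3))) atBot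
      (𝓝 ((5 / 16 : ℝ) * (-(π / 2)) + ((5 / 16 : ℝ) * 0 + (5 / 24 : ℝ) * 0 + (1 / 6 : ℝ) * 0))) :=
    ((tendsto_nhds_of_tendsto_nhdsWithin tendsto_arctan_atBot).const_mul _).add
      (((tendsto_bot_aux 1 (by norm_num)).const_mul (5 / 16 : ℝ)) |>.add ((tendsto_bot_aux 2 (by norm_num)).const_mul (5 / 24 : ℝ)) |>.add ((tendsto_bot_aux 3 (by norm_num)).const_mul (1 / 6 : ℝ)))
  rw [integral_eq_of_antideriv _ 4 (by norm_num) key _ _ hbot htop]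
  ring


lemma Cval5 : ∫ u : ℝ, ((1 + u ^ 2)⁻¹) ^ 5 = 35 * π / 128 := by
  have key : ∀ u : ℝ, HasDerivAt (fun u : ℝ => (35 / 128 : ℝ) * arctan u + ((35 / 128 : ℝ) * (u * ((1 + u ^ 2)⁻¹) ^ 1) + (35 / 192 : ℝ) * (u * ((1 + u ^ 2)⁻¹) ^ 2) + (7 / 48 : ℝ) * (u * ((1 + u ^ 2)⁻¹) ^ 3) + (1 / 8 : ℝ) * (u * ((1 + u ^ 2)⁻¹) ^ 4)))
      (((1 + u ^ 2)⁻¹) ^ 5) u := by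
    intro u
    have h0 : (1 : ℝ) + u ^ 2 ≠ 0 := by positivity
    have h := ((hasDerivAt_arctan' u).const_mul (35 / 128 : ℝ)).add
      (((hasDerivAt_ratpart 1 u).const_mul (35 / 128 : ℝ)) |>.add ((hasDerivAt_ratpart 2 u).const_mul (35 / 192 : ℝ)) |>.add ((hasDerivAt_ratpart 3 u).const_mul (7 / 48 : ℝ)) |>.add ((hasDerivAt_ratpart 4 u).const_mul (1 / 8 : ℝ)))
    refine h.congr_deriv (Eq.symm ?_)
    simp only [Nat.cast_ofNat, Nat.cast_one, Nat.reduceSub, pow_zero, pow_one, mul_one, one_mul]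
    field_simp
    ring
  have htop : Tendsto (fun u : ℝ => (35 / 128 : ℝ) * arctan u + ((35 / 128 : ℝ) * (u * ((1 + u ^ 2)⁻¹) ^ 1) + (35 / 192 : ℝ) * (u * ((1 + u ^ 2)⁻¹) ^ 2) + (7 / 48 : ℝ) * (u * ((1 + u ^ 2)⁻¹) ^ 3) + (1 / 8 : ℝ) * (u * ((1 + u ^ 2)⁻¹) ^ 4))) atTop
      (𝓝 ((35 / 128 : ℝ) * (π / 2) + ((35 / 128 : ℝ) * 0 + (35 / 192 : ℝ) * 0 + (7 / 48 : ℝ) * 0 + (1 / 8 : ℝ) * 0))) :=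
    ((tendsto_nhds_of_tendsto_nhdsWithin tendsto_arctan_atTop).const_mul _).add
      (((tendsto_top_aux 1 (by norm_num)).const_mul (35 / 128 : ℝ)) |>.add ((tendsto_top_aux 2 (by norm_num)).const_mul (35 / 192 : ℝ)) |>.add ((tendsto_top_aux 3 (by norm_num)).const_mul (7 / 48 : ℝ)) |>.add ((tendsto_top_aux 4 (by norm_num)).const_mul (1 / 8 : ℝ)))
  have hbot : Tendsto (fun u : ℝ => (35 / 128 : ℝ) * arctan u + ((35 / 128 : ℝ) * (u * ((1 + u ^ 2)⁻¹) ^ 1) + (35 / 192 : ℝ) * (u * ((1 + u ^ 2)⁻¹) ^ 2) + (7 / 48 : ℝ) * (u * ((1 + u ^ 2)⁻¹) ^ 3) + (1 / 8 : ℝ) * (u * ((1 + u ^ 2)⁻¹) ^ 4))) atBot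
      (𝓝 ((35 / 128 : ℝ) * (-(π / 2)) + ((35 / 128 : ℝ) * 0 + (35 / 192 : ℝ) * 0 + (7 / 48 : ℝ) * 0 + (1 / 8 : ℝ) * 0))) :=
    ((tendsto_nhds_of_tendsto_nhdsWithin tendsto_arctan_atBot).const_mul _).add
      (((tendsto_bot_aux 1 (by norm_num)).const_mul (35 / 128 : ℝ)) |>.add ((tendsto_bot_aux 2 (by norm_num)).const_mul (35 / 192 : ℝ)) |>.add ((tendsto_bot_aux 3 (by norm_num)).const_mul (7 / 48 : ℝ)) |>.add ((tendsto_bot_aux 4 (by norm_num)).const_mul (1 / 8 : ℝ)))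
  rw [integral_eq_of_antideriv _ 5 (by norm_num) key _ _ hbot htop]
  ring

lemma integrableG (a m : ℕ) (h : a + 2 ≤ m) :
    Integrable (fun x : ℝ => x ^ (2 * a) * (Real.sqrt (1 + x ^ 2) * ((1 + x ^ 2)⁻¹) ^ m)) := by
  have hc : Continuous (fun x : ℝ => x ^ (2 * a) * (Real.sqrt (1 + x ^ 2) * ((1 + x ^ 2)⁻¹) ^ m)) := by
    refine (continuous_pow _).mul (Continuous.mul ?_ (Continuous.pow ?_ _))
    · exact Real.continuous_sqrt.comp (continuous_const.add (continuous_pow 2))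
    · exact (continuous_const.add (continuous_pow 2)).inv₀ (fun t => (add_pos_of_pos_of_nonneg one_pos (sq_nonneg t)).ne')
  refine integrable_inv_one_add_sq.mono hc.aestronglyMeasurable (.of_forall fun t => ?_)
  have h1 : (0:ℝ) < 1 + t ^ 2 := by positivity
  have h0 : ((1:ℝ) + t ^ 2)⁻¹ ≠ 0 := by positivity
  have hsq : Real.sqrt (1 + t ^ 2) ≤ 1 + t ^ 2 := by
    rw [Real.sqrt_le_iff]
    exact ⟨by positivity, by nlinarith⟩
  rw [Real.norm_eq_abs, Real.norm_eq_abs,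
    abs_of_nonneg (mul_nonneg (by rw [pow_mul]; positivity)
      (mul_nonneg (Real.sqrt_nonneg _) (by positivity))),
    abs_of_nonneg (by positivity)]
  calc t ^ (2 * a) * (Real.sqrt (1 + t ^ 2) * ((1 + t ^ 2)⁻¹) ^ m)
      ≤ (1 + t ^ 2) ^ a * ((1 + t ^ 2) * ((1 + t ^ 2)⁻¹) ^ m) := by
        apply mul_le_mul
        · rw [pow_mul]; exact pow_le_pow_left₀ (sq_nonneg t) (by nlinarith) a
        · exact mul_le_mul_of_nonneg_right hsq (by positivity)
        · exact mul_nonneg (Real.sqrt_nonneg _) (by positivity)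
        · positivity
    _ = ((1 + t ^ 2)⁻¹) ^ (m - (a + 1)) := by
        rw [pow_sub₀ _ h0 (by omega : a + 1 ≤ m), inv_pow, inv_pow, inv_inv]
        field_simp
        ring
    _ ≤ ((1 + t ^ 2)⁻¹) ^ 1 := by
        apply pow_le_pow_of_le_one (by positivity) _ (by omega)
        rw [inv_le_one_iff₀]; right; nlinarith
    _ = (1 + t ^ 2)⁻¹ := pow_one _

lemma hasDerivAt_sqrtinv (u : ℝ) :
    HasDerivAt (fun u : ℝ => (Real.sqrt (1 + u ^ 2))⁻¹)
      (-(1 / (2 * Real.sqrt (1 + u ^ 2)) * (2 * u)) / Real.sqrt (1 + u ^ 2) ^ 2) u := by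
  have h1 : HasDerivAt (fun u : ℝ => 1 + u ^ 2) (2 * u) u := by
    simpa using (hasDerivAt_pow 2 u).const_add 1
  have hs : HasDerivAt (fun u : ℝ => Real.sqrt (1 + u ^ 2))
      (1 / (2 * Real.sqrt (1 + u ^ 2)) * (2 * u)) u :=
    (Real.hasDerivAt_sqrt (by positivity)).comp u h1
  exact hs.inv (by positivity)

lemma Gval1 : ∫ x : ℝ, Real.sqrt (1 + x ^ 2) * ((1 + x ^ 2)⁻¹) ^ 2 = 2 := by
  have key : ∀ u : ℝ, HasDerivAt (fun u : ℝ => u * (Real.sqrt (1 + u ^ 2))⁻¹)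
      (Real.sqrt (1 + u ^ 2) * ((1 + u ^ 2)⁻¹) ^ 2) u := by
    intro u
    have hsp : (0:ℝ) < Real.sqrt (1 + u ^ 2) := Real.sqrt_pos.2 (by positivity)
    have h := (hasDerivAt_id' u).mul (hasDerivAt_sqrtinv u)
    refine h.congr_deriv (Eq.symm ?_)
    rw [show (1:ℝ) + u ^ 2 = Real.sqrt (1 + u ^ 2) ^ 2 from (Real.sq_sqrt (by positivity)).symm,
      Real.sqrt_sq hsp.le]
    have hs2 : Real.sqrt (1 + u ^ 2) ^ 2 = 1 + u ^ 2 := Real.sq_sqrt (by positivity)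
    field_simp
    linear_combination (-1) * hs2
  have hint : Integrable (fun x : ℝ => Real.sqrt (1 + x ^ 2) * ((1 + x ^ 2)⁻¹) ^ 2) := by
    simpa using integrableG 0 2 (by norm_num)
  have := integral_of_hasDerivAt_of_tendsto key hint tendsto_sqrt_bot tendsto_sqrt_top
  rw [this]; norm_num

lemma Gval2 : ∫ x : ℝ, x ^ 2 * (Real.sqrt (1 + x ^ 2) * ((1 + x ^ 2)⁻¹) ^ 3) = 2 / 3 := by
  have key : ∀ u : ℝ, HasDerivAt (fun u : ℝ => (1 / 3 : ℝ) * (u * (Real.sqrt (1 + u ^ 2))⁻¹) ^ 3)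
      (u ^ 2 * (Real.sqrt (1 + u ^ 2) * ((1 + u ^ 2)⁻¹) ^ 3)) u := by
    intro u
    have hsp : (0:ℝ) < Real.sqrt (1 + u ^ 2) := Real.sqrt_pos.2 (by positivity)
    have h := (((hasDerivAt_id' u).mul (hasDerivAt_sqrtinv u)).pow 3).const_mul (1 / 3 : ℝ)
    refine h.congr_deriv (Eq.symm ?_)
    simp only [Pi.mul_apply]
    rw [show (1:ℝ) + u ^ 2 = Real.sqrt (1 + u ^ 2) ^ 2 from (Real.sq_sqrt (by positivity)).symm,
      Real.sqrt_sq hsp.le]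
    have hs2 : Real.sqrt (1 + u ^ 2) ^ 2 = 1 + u ^ 2 := Real.sq_sqrt (by positivity)
    have hsne : Real.sqrt (1 + u ^ 2) ≠ 0 := hsp.ne'
    field_simp
    have hq2 : Real.sqrt (1 + u ^ 2) ^ 2 * (Real.sqrt (1 + u ^ 2))⁻¹ ^ 2 = 1 := by
      rw [← mul_pow, mul_inv_cancel₀ hsne, one_pow]
    linear_combination (-3 * u ^ 2) * hs2
      + (-3 * u ^ 2 * Real.sqrt (1 + u ^ 2) ^ 2 + 3 * u ^ 4) * hq2
  have hint : Integrable (fun x : ℝ => x ^ 2 * (Real.sqrt (1 + x ^ 2) * ((1 + x ^ 2)⁻¹) ^ 3)) := by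
    simpa [pow_mul] using integrableG 1 3 (by norm_num)
  have hbot : Tendsto (fun u : ℝ => (1 / 3 : ℝ) * (u * (Real.sqrt (1 + u ^ 2))⁻¹) ^ 3) atBot
      (𝓝 ((1 / 3 : ℝ) * (-1) ^ 3)) := (tendsto_sqrt_bot.pow 3).const_mul _
  have htop : Tendsto (fun u : ℝ => (1 / 3 : ℝ) * (u * (Real.sqrt (1 + u ^ 2))⁻¹) ^ 3) atTop
      (𝓝 ((1 / 3 : ℝ) * 1 ^ 3)) := (tendsto_sqrt_top.pow 3).const_mul _
  have := integral_of_hasDerivAt_of_tendsto key hint hbot htop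
  rw [this]; norm_num

lemma Cred (b n : ℕ) (h : b + 1 ≤ n) :
    ∫ t : ℝ, t ^ (2 * (b + 1)) * ((1 + t ^ 2)⁻¹) ^ (n + 1)
      = (∫ t : ℝ, t ^ (2 * b) * ((1 + t ^ 2)⁻¹) ^ n)
        - ∫ t : ℝ, t ^ (2 * b) * ((1 + t ^ 2)⁻¹) ^ (n + 1) := by
  rw [← integral_sub (integrable1 b n (by omega)) (integrable1 b (n + 1) (by omega))]
  congr 1
  funext t
  have h1 : ((1:ℝ) + t ^ 2) ≠ 0 := by positivity
  have key : t ^ 2 * ((1 + t ^ 2)⁻¹) = 1 - (1 + t ^ 2)⁻¹ := by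
    field_simp
    ring
  calc t ^ (2 * (b + 1)) * ((1 + t ^ 2)⁻¹) ^ (n + 1)
      = t ^ (2 * b) * ((1 + t ^ 2)⁻¹) ^ n * (t ^ 2 * ((1 + t ^ 2)⁻¹)) := by ring
    _ = t ^ (2 * b) * ((1 + t ^ 2)⁻¹) ^ n - t ^ (2 * b) * ((1 + t ^ 2)⁻¹) ^ (n + 1) := by
        rw [key]; ring

lemma Cp13 : ∫ t : ℝ, t ^ 2 * ((1 + t ^ 2)⁻¹) ^ 3 = π / 8 := by
  have h := Cred 0 2 (by norm_num)
  simp only [show 2 * (0 + 1) = 2 from rfl, show 2 * 0 = 0 from rfl, pow_zero, one_mul] at h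
  rw [show (2:ℕ) + 1 = 3 from rfl] at h
  rw [h, Cval2, Cval3]; ring

lemma Cp14 : ∫ t : ℝ, t ^ 2 * ((1 + t ^ 2)⁻¹) ^ 4 = π / 16 := by
  have h := Cred 0 3 (by norm_num)
  simp only [show 2 * (0 + 1) = 2 from rfl, show 2 * 0 = 0 from rfl, pow_zero, one_mul] at h
  rw [show (3:ℕ) + 1 = 4 from rfl] at h
  rw [h, Cval3, Cval4]; ring

lemma Cp15 : ∫ t : ℝ, t ^ 2 * ((1 + t ^ 2)⁻¹) ^ 5 = 5 * π / 128 := by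
  have h := Cred 0 4 (by norm_num)
  simp only [show 2 * (0 + 1) = 2 from rfl, show 2 * 0 = 0 from rfl, pow_zero, one_mul] at h
  rw [show (4:ℕ) + 1 = 5 from rfl] at h
  rw [h, Cval4, Cval5]; ring

lemma Cp24 : ∫ t : ℝ, t ^ 4 * ((1 + t ^ 2)⁻¹) ^ 4 = π / 16 := by
  have h := Cred 1 3 (by norm_num)
  simp only [show 2 * (1 + 1) = 4 from rfl, show 2 * 1 = 2 from rfl] at h
  rw [show (3:ℕ) + 1 = 4 from rfl] at h
  rw [h, Cp13, Cp14]; ring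

lemma Cp25 : ∫ t : ℝ, t ^ 4 * ((1 + t ^ 2)⁻¹) ^ 5 = 3 * π / 128 := by
  have h := Cred 1 4 (by norm_num)
  simp only [show 2 * (1 + 1) = 4 from rfl, show 2 * 1 = 2 from rfl] at h
  rw [show (4:ℕ) + 1 = 5 from rfl] at h
  rw [h, Cp14, Cp15]; ring

lemma Cp35 : ∫ t : ℝ, t ^ 6 * ((1 + t ^ 2)⁻¹) ^ 5 = 5 * π / 128 := by
  have h := Cred 2 4 (by norm_num)
  simp only [show 2 * (2 + 1) = 6 from rfl, show 2 * 2 = 4 from rfl] at h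
  rw [show (4:ℕ) + 1 = 5 from rfl] at h
  rw [h, Cp24, Cp25]; ring

lemma integrable2 (k : ℝ) (hk : 0 < k) (a b n : ℕ) (h : a + b + 2 ≤ n) :
    Integrable (fun p : ℝ × ℝ =>
      p.1 ^ (2 * a) * (p.2 ^ (2 * b) * ((1 + p.1 ^ 2 + k ^ 2 * p.2 ^ 2)⁻¹) ^ n)) := by
  have hden : ∀ p : ℝ × ℝ, (0:ℝ) < 1 + p.1 ^ 2 + k ^ 2 * p.2 ^ 2 := fun p => by positivity
  have hc : Continuous (fun p : ℝ × ℝ =>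
      p.1 ^ (2 * a) * (p.2 ^ (2 * b) * ((1 + p.1 ^ 2 + k ^ 2 * p.2 ^ 2)⁻¹) ^ n)) := by
    refine (continuous_fst.pow _).mul ((continuous_snd.pow _).mul (Continuous.pow ?_ _))
    exact ((continuous_const.add (continuous_fst.pow 2)).add
      (continuous_const.mul (continuous_snd.pow 2))).inv₀ (fun p => (hden p).ne')
  set m : ℝ := min 1 (k ^ 2) with hm
  have hmp : 0 < m := lt_min one_pos (by positivity)
  set M : ℝ := (k⁻¹) ^ (2 * b) * m⁻¹ with hM
  have hbound : Integrable (fun p : ℝ × ℝ => M * ((1 + p.1 ^ 2)⁻¹ * (1 + p.2 ^ 2)⁻¹)) := by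
    exact (integrable_inv_one_add_sq.mul_prod integrable_inv_one_add_sq).const_mul M
  refine hbound.mono hc.aestronglyMeasurable (.of_forall fun p => ?_)
  obtain ⟨x, y⟩ := p
  simp only
  set D : ℝ := 1 + x ^ 2 + k ^ 2 * y ^ 2 with hD
  set A : ℝ := 1 + x ^ 2 with hA
  set B : ℝ := 1 + k ^ 2 * y ^ 2 with hB
  have hDpos : (0:ℝ) < D := by positivity
  have hApos : (0:ℝ) < A := by positivity
  have hBpos : (0:ℝ) < B := by positivity
  have hD1 : (1:ℝ) ≤ D := by simp only [hD]; nlinarith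
  have hDA : A ≤ D := by simp only [hD, hA]; nlinarith
  have hDB : B ≤ D := by simp only [hD, hB]; nlinarith
  rw [Real.norm_eq_abs, Real.norm_eq_abs,
    abs_of_nonneg (mul_nonneg (by rw [pow_mul]; positivity)
      (mul_nonneg (by rw [pow_mul]; positivity) (by positivity))),
    abs_of_nonneg (by positivity)]
  have step1 : ((D)⁻¹) ^ n ≤ ((D)⁻¹) ^ ((a + 1) + (b + 1)) := by
    apply pow_le_pow_of_le_one (by positivity) _ (by omega)
    rw [inv_le_one_iff₀]; right; exact hD1
  have step2 : ((D)⁻¹) ^ ((a + 1) + (b + 1)) ≤ (A⁻¹) ^ (a + 1) * (B⁻¹) ^ (b + 1) := by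
    rw [pow_add]
    exact mul_le_mul (pow_le_pow_left₀ (by positivity) (inv_anti₀ hApos hDA) _)
      (pow_le_pow_left₀ (by positivity) (inv_anti₀ hBpos hDB) _)
      (by positivity) (by positivity)
  have hx : x ^ (2 * a) ≤ A ^ a := by
    rw [pow_mul]; exact pow_le_pow_left₀ (sq_nonneg x) (by simp only [hA]; nlinarith) a
  have hy : y ^ (2 * b) * (B⁻¹) ^ b ≤ (k⁻¹) ^ (2 * b) := by
    rw [pow_mul, pow_mul, ← mul_pow]
    apply pow_le_pow_left₀ (by positivity)
    rw [mul_comm, inv_mul_le_iff₀ hBpos]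
    simp only [hB]
    have hkk : k ^ 2 * k⁻¹ ^ 2 = 1 := by field_simp
    nlinarith [hkk, sq_nonneg k⁻¹]
  have hBm : B⁻¹ ≤ m⁻¹ * (1 + y ^ 2)⁻¹ := by
    rw [← mul_inv]
    apply inv_anti₀ (by positivity)
    simp only [hB, hm]
    have h1 : min 1 (k ^ 2) ≤ 1 := min_le_left _ _
    have h2 : min 1 (k ^ 2) ≤ k ^ 2 := min_le_right _ _
    nlinarith [sq_nonneg y]
  calc x ^ (2 * a) * (y ^ (2 * b) * (D⁻¹) ^ n)
      ≤ x ^ (2 * a) * (y ^ (2 * b) * ((A⁻¹) ^ (a + 1) * (B⁻¹) ^ (b + 1))) := by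
        apply mul_le_mul_of_nonneg_left _ (by rw [pow_mul]; positivity)
        apply mul_le_mul_of_nonneg_left _ (by rw [pow_mul]; positivity)
        exact le_trans step1 step2
    _ = (x ^ (2 * a) * (A⁻¹) ^ a) * (y ^ (2 * b) * (B⁻¹) ^ b) * (A⁻¹ * B⁻¹) := by ring
    _ ≤ (A ^ a * (A⁻¹) ^ a) * ((k⁻¹) ^ (2 * b)) * (A⁻¹ * B⁻¹) := by
        apply mul_le_mul_of_nonneg_right _ (by positivity)
        exact mul_le_mul (mul_le_mul_of_nonneg_right hx (by positivity)) hy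
          (by rw [pow_mul]; positivity) (by positivity)
    _ = (k⁻¹) ^ (2 * b) * (A⁻¹ * B⁻¹) := by
        rw [← mul_pow, mul_inv_cancel₀ hApos.ne', one_pow, one_mul]
    _ ≤ (k⁻¹) ^ (2 * b) * (A⁻¹ * (m⁻¹ * (1 + y ^ 2)⁻¹)) := by
        apply mul_le_mul_of_nonneg_left _ (by positivity)
        exact mul_le_mul_of_nonneg_left hBm (by positivity)
    _ = M * ((1 + x ^ 2)⁻¹ * (1 + y ^ 2)⁻¹) := by rw [hM, hA]; ring

lemma inner_int (k c : ℝ) (hk : 0 < k) (hc : 0 < c) (b n : ℕ) :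
    ∫ y : ℝ, y ^ (2 * b) * ((c + k ^ 2 * y ^ 2)⁻¹) ^ n
      = Real.sqrt c * c ^ b * (c⁻¹) ^ n * (k⁻¹) ^ (2 * b + 1) *
          ∫ t : ℝ, t ^ (2 * b) * ((1 + t ^ 2)⁻¹) ^ n := by
  set s : ℝ := Real.sqrt c with hs
  have hsp : 0 < s := Real.sqrt_pos.2 hc
  have hs2 : s ^ 2 = c := Real.sq_sqrt hc.le
  have h1 : (fun y : ℝ => y ^ (2 * b) * ((c + k ^ 2 * y ^ 2)⁻¹) ^ n)
      = fun y => (fun t : ℝ => (s / k * t) ^ (2 * b) * ((c * (1 + t ^ 2))⁻¹) ^ n)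
          (k / s * y) := by
    funext y
    simp only
    have e1 : s / k * (k / s * y) = y := by field_simp
    have e2 : c * (1 + (k / s * y) ^ 2) = c + k ^ 2 * y ^ 2 := by
      field_simp
      linear_combination (-(k ^ 2 * y ^ 2)) * hs2
    rw [e1, e2]
  rw [h1, Measure.integral_comp_mul_left
    (fun t : ℝ => (s / k * t) ^ (2 * b) * ((c * (1 + t ^ 2))⁻¹) ^ n) (k / s)]
  have h2 : (fun t : ℝ => (s / k * t) ^ (2 * b) * ((c * (1 + t ^ 2))⁻¹) ^ n)
      = fun t : ℝ => ((s / k) ^ (2 * b) * (c⁻¹) ^ n) * (t ^ (2 * b) * ((1 + t ^ 2)⁻¹) ^ n) := by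
    funext t
    rw [mul_pow, mul_inv, mul_pow]
    ring
  rw [h2, MeasureTheory.integral_const_mul, smul_eq_mul]
  rw [abs_of_pos (by positivity : (0:ℝ) < (k / s)⁻¹)]
  have h3 : (s / k) ^ (2 * b) = c ^ b * (k⁻¹) ^ (2 * b) := by
    rw [div_eq_mul_inv, mul_pow, pow_mul, hs2]
  rw [h3, inv_div]
  ring

lemma term_int (k : ℝ) (hk : 0 < k) (a b m : ℕ) (h : a + 2 ≤ m) (G C : ℝ)
    (hC : (∫ t : ℝ, t ^ (2 * b) * ((1 + t ^ 2)⁻¹) ^ (b + m)) = C)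
    (hG : (∫ x : ℝ, x ^ (2 * a) * (Real.sqrt (1 + x ^ 2) * ((1 + x ^ 2)⁻¹) ^ m)) = G) :
    ∫ p : ℝ × ℝ, p.1 ^ (2 * a) * (p.2 ^ (2 * b) * ((1 + p.1 ^ 2 + k ^ 2 * p.2 ^ 2)⁻¹) ^ (b + m))
      = (k⁻¹) ^ (2 * b + 1) * C * G := by
  have hint := integrable2 k hk a b (b + m) (by omega)
  rw [Measure.volume_eq_prod] at hint ⊢
  rw [MeasureTheory.integral_prod _ hint]
  have key : ∀ x : ℝ,
      (∫ y : ℝ, x ^ (2 * a) * (y ^ (2 * b) * ((1 + x ^ 2 + k ^ 2 * y ^ 2)⁻¹) ^ (b + m)))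
        = (k⁻¹) ^ (2 * b + 1) * C *
            (x ^ (2 * a) * (Real.sqrt (1 + x ^ 2) * ((1 + x ^ 2)⁻¹) ^ m)) := by
    intro x
    have hcpos : (0:ℝ) < 1 + x ^ 2 := by positivity
    have hcb : (1 + x ^ 2) ^ b * ((1 + x ^ 2)⁻¹) ^ (b + m) = ((1 + x ^ 2)⁻¹) ^ m := by
      rw [pow_add, ← mul_assoc, ← mul_pow, mul_inv_cancel₀ hcpos.ne', one_pow, one_mul]
    rw [MeasureTheory.integral_const_mul]
    have e := inner_int k (1 + x ^ 2) hk hcpos b (b + m)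
    rw [hC] at e
    rw [e]
    linear_combination (x ^ (2 * a) * Real.sqrt (1 + x ^ 2) * (k⁻¹) ^ (2 * b + 1) * C) * hcb
  rw [show (fun x : ℝ =>
      ∫ y : ℝ, x ^ (2 * a) * (y ^ (2 * b) * ((1 + x ^ 2 + k ^ 2 * y ^ 2)⁻¹) ^ (b + m)))
      = fun x : ℝ => (k⁻¹) ^ (2 * b + 1) * C *
          (x ^ (2 * a) * (Real.sqrt (1 + x ^ 2) * ((1 + x ^ 2)⁻¹) ^ m)) from funext key]
  rw [MeasureTheory.integral_const_mul, hG]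

set_option maxHeartbeats 1000000

/-- `b₀(ξ₁,ξ₂) = (1 + ξ₁² + k²ξ₂²)⁻¹`. -/
noncomputable def b0 (k ξ1 ξ2 : ℝ) : ℝ := (1 + ξ1 ^ 2 + k ^ 2 * ξ2 ^ 2)⁻¹

/-- The integral over `ℝ²` of the commutative (`θ = 0`) symbol `b₂(ξ)` equals
`−(π/3)(δ₁k)²/k³ + (π/6)(δ₁₁k)/k²`.  Here `k > 0` and `d1 = δ₁k`, `d2 = δ₂k`,
`d11 = δ₁₁k`, `d22 = δ₂₂k` are fixed real numbers. -/
theorem commutative_b2_integral (k d1 d2 d11 d22 : ℝ) (hk : 0 < k) :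
    (∫ p : ℝ × ℝ,
        (48 * (b0 k p.1 p.2) ^ 5 * k ^ 6 * d2 ^ 2 * p.2 ^ 6
          + 48 * (b0 k p.1 p.2) ^ 5 * k ^ 2 * d1 ^ 2 * p.1 ^ 2 * p.2 ^ 4
          - 8 * (b0 k p.1 p.2) ^ 4 * k ^ 5 * d22 * p.2 ^ 4
          - 56 * (b0 k p.1 p.2) ^ 4 * k ^ 4 * d2 ^ 2 * p.2 ^ 4
          - 8 * (b0 k p.1 p.2) ^ 4 * k ^ 2 * d1 ^ 2 * p.2 ^ 4
          - 8 * (b0 k p.1 p.2) ^ 4 * k * d11 * p.1 ^ 2 * p.2 ^ 2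
          - 8 * (b0 k p.1 p.2) ^ 4 * d1 ^ 2 * p.1 ^ 2 * p.2 ^ 2
          + 6 * (b0 k p.1 p.2) ^ 3 * k ^ 3 * d22 * p.2 ^ 2
          + 14 * (b0 k p.1 p.2) ^ 3 * k ^ 2 * d2 ^ 2 * p.2 ^ 2
          + 2 * (b0 k p.1 p.2) ^ 3 * k * d11 * p.2 ^ 2
          + (b0 k p.1 p.2) ^ 3 * d1 ^ 2 * p.2 ^ 2
          - (1 / 2) * (b0 k p.1 p.2) ^ 2 * k * d22
          - (1 / 4) * (b0 k p.1 p.2) ^ 2 * d2 ^ 2))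
      = -(π / 3) * d1 ^ 2 / k ^ 3 + (π / 6) * d11 / k ^ 2 := by
  have hkne : k ≠ 0 := hk.ne'
  -- the six basic moment integrals
  have T1 : (∫ p : ℝ × ℝ, p.2 ^ 6 * ((1 + p.1 ^ 2 + k ^ 2 * p.2 ^ 2)⁻¹) ^ 5)
      = k⁻¹ ^ 7 * (5 * π / 128) * 2 := by
    have := term_int k hk 0 3 2 (by norm_num) 2 (5 * π / 128)
      (by simpa using Cp35) (by simpa using Gval1)
    simpa using this
  have T2 : (∫ p : ℝ × ℝ, p.1 ^ 2 * (p.2 ^ 4 * ((1 + p.1 ^ 2 + k ^ 2 * p.2 ^ 2)⁻¹) ^ 5))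
      = k⁻¹ ^ 5 * (3 * π / 128) * (2 / 3) := by
    have := term_int k hk 1 2 3 (by norm_num) (2 / 3) (3 * π / 128)
      (by simpa using Cp25) (by simpa using Gval2)
    simpa using this
  have T3 : (∫ p : ℝ × ℝ, p.2 ^ 4 * ((1 + p.1 ^ 2 + k ^ 2 * p.2 ^ 2)⁻¹) ^ 4)
      = k⁻¹ ^ 5 * (π / 16) * 2 := by
    have := term_int k hk 0 2 2 (by norm_num) 2 (π / 16)
      (by simpa using Cp24) (by simpa using Gval1)
    simpa using this
  have T4 : (∫ p : ℝ × ℝ, p.1 ^ 2 * (p.2 ^ 2 * ((1 + p.1 ^ 2 + k ^ 2 * p.2 ^ 2)⁻¹) ^ 4))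
      = k⁻¹ ^ 3 * (π / 16) * (2 / 3) := by
    have := term_int k hk 1 1 3 (by norm_num) (2 / 3) (π / 16)
      (by simpa using Cp14) (by simpa using Gval2)
    simpa using this
  have T5 : (∫ p : ℝ × ℝ, p.2 ^ 2 * ((1 + p.1 ^ 2 + k ^ 2 * p.2 ^ 2)⁻¹) ^ 3)
      = k⁻¹ ^ 3 * (π / 8) * 2 := by
    have := term_int k hk 0 1 2 (by norm_num) 2 (π / 8)
      (by simpa using Cp13) (by simpa using Gval1)
    simpa using this
  have T6 : (∫ p : ℝ × ℝ, ((1 + p.1 ^ 2 + k ^ 2 * p.2 ^ 2)⁻¹) ^ 2)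
      = k⁻¹ ^ 1 * (π / 2) * 2 := by
    have := term_int k hk 0 0 2 (by norm_num) 2 (π / 2)
      (by simpa using Cval2) (by simpa using Gval1)
    simpa using this
  -- integrability of the six basic integrands
  have I1 : Integrable (fun p : ℝ × ℝ => p.2 ^ 6 * ((1 + p.1 ^ 2 + k ^ 2 * p.2 ^ 2)⁻¹) ^ 5) := by
    simpa using integrable2 k hk 0 3 5 (by norm_num)
  have I2 : Integrable (fun p : ℝ × ℝ =>
      p.1 ^ 2 * (p.2 ^ 4 * ((1 + p.1 ^ 2 + k ^ 2 * p.2 ^ 2)⁻¹) ^ 5)) := by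
    simpa using integrable2 k hk 1 2 5 (by norm_num)
  have I3 : Integrable (fun p : ℝ × ℝ => p.2 ^ 4 * ((1 + p.1 ^ 2 + k ^ 2 * p.2 ^ 2)⁻¹) ^ 4) := by
    simpa using integrable2 k hk 0 2 4 (by norm_num)
  have I4 : Integrable (fun p : ℝ × ℝ =>
      p.1 ^ 2 * (p.2 ^ 2 * ((1 + p.1 ^ 2 + k ^ 2 * p.2 ^ 2)⁻¹) ^ 4)) := by
    simpa using integrable2 k hk 1 1 4 (by norm_num)
  have I5 : Integrable (fun p : ℝ × ℝ => p.2 ^ 2 * ((1 + p.1 ^ 2 + k ^ 2 * p.2 ^ 2)⁻¹) ^ 3) := by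
    simpa using integrable2 k hk 0 1 3 (by norm_num)
  have I6 : Integrable (fun p : ℝ × ℝ => ((1 + p.1 ^ 2 + k ^ 2 * p.2 ^ 2)⁻¹) ^ 2) := by
    simpa using integrable2 k hk 0 0 2 (by norm_num)
  set c1 : ℝ := 48 * k ^ 6 * d2 ^ 2 with hc1
  set c2 : ℝ := 48 * k ^ 2 * d1 ^ 2 with hc2
  set c3 : ℝ := -(8 * k ^ 5 * d22) - 56 * k ^ 4 * d2 ^ 2 - 8 * k ^ 2 * d1 ^ 2 with hc3
  set c4 : ℝ := -(8 * k * d11) - 8 * d1 ^ 2 with hc4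
  set c5 : ℝ := 6 * k ^ 3 * d22 + 14 * k ^ 2 * d2 ^ 2 + 2 * k * d11 + d1 ^ 2 with hc5
  set c6 : ℝ := -(1 / 2 * k * d22) - 1 / 4 * d2 ^ 2 with hc6
  have hfun : (fun p : ℝ × ℝ =>
        (48 * (b0 k p.1 p.2) ^ 5 * k ^ 6 * d2 ^ 2 * p.2 ^ 6
          + 48 * (b0 k p.1 p.2) ^ 5 * k ^ 2 * d1 ^ 2 * p.1 ^ 2 * p.2 ^ 4
          - 8 * (b0 k p.1 p.2) ^ 4 * k ^ 5 * d22 * p.2 ^ 4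
          - 56 * (b0 k p.1 p.2) ^ 4 * k ^ 4 * d2 ^ 2 * p.2 ^ 4
          - 8 * (b0 k p.1 p.2) ^ 4 * k ^ 2 * d1 ^ 2 * p.2 ^ 4
          - 8 * (b0 k p.1 p.2) ^ 4 * k * d11 * p.1 ^ 2 * p.2 ^ 2
          - 8 * (b0 k p.1 p.2) ^ 4 * d1 ^ 2 * p.1 ^ 2 * p.2 ^ 2
          + 6 * (b0 k p.1 p.2) ^ 3 * k ^ 3 * d22 * p.2 ^ 2
          + 14 * (b0 k p.1 p.2) ^ 3 * k ^ 2 * d2 ^ 2 * p.2 ^ 2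
          + 2 * (b0 k p.1 p.2) ^ 3 * k * d11 * p.2 ^ 2
          + (b0 k p.1 p.2) ^ 3 * d1 ^ 2 * p.2 ^ 2
          - (1 / 2) * (b0 k p.1 p.2) ^ 2 * k * d22
          - (1 / 4) * (b0 k p.1 p.2) ^ 2 * d2 ^ 2))
      = (fun p : ℝ × ℝ =>
          c1 * (p.2 ^ 6 * ((1 + p.1 ^ 2 + k ^ 2 * p.2 ^ 2)⁻¹) ^ 5)
          + (c2 * (p.1 ^ 2 * (p.2 ^ 4 * ((1 + p.1 ^ 2 + k ^ 2 * p.2 ^ 2)⁻¹) ^ 5))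
          + (c3 * (p.2 ^ 4 * ((1 + p.1 ^ 2 + k ^ 2 * p.2 ^ 2)⁻¹) ^ 4)
          + (c4 * (p.1 ^ 2 * (p.2 ^ 2 * ((1 + p.1 ^ 2 + k ^ 2 * p.2 ^ 2)⁻¹) ^ 4))
          + (c5 * (p.2 ^ 2 * ((1 + p.1 ^ 2 + k ^ 2 * p.2 ^ 2)⁻¹) ^ 3)
          + c6 * ((1 + p.1 ^ 2 + k ^ 2 * p.2 ^ 2)⁻¹) ^ 2))))) := by
    funext p
    simp only [b0, hc1, hc2, hc3, hc4, hc5, hc6]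
    ring
  rw [hfun]
  have J5 : Integrable (fun p : ℝ × ℝ =>
      c5 * (p.2 ^ 2 * ((1 + p.1 ^ 2 + k ^ 2 * p.2 ^ 2)⁻¹) ^ 3)
        + c6 * ((1 + p.1 ^ 2 + k ^ 2 * p.2 ^ 2)⁻¹) ^ 2) :=
    (I5.const_mul c5).add (I6.const_mul c6)
  have J4 : Integrable (fun p : ℝ × ℝ =>
      c4 * (p.1 ^ 2 * (p.2 ^ 2 * ((1 + p.1 ^ 2 + k ^ 2 * p.2 ^ 2)⁻¹) ^ 4))
        + (c5 * (p.2 ^ 2 * ((1 + p.1 ^ 2 + k ^ 2 * p.2 ^ 2)⁻¹) ^ 3)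
        + c6 * ((1 + p.1 ^ 2 + k ^ 2 * p.2 ^ 2)⁻¹) ^ 2)) :=
    (I4.const_mul c4).add J5
  have J3 : Integrable (fun p : ℝ × ℝ =>
      c3 * (p.2 ^ 4 * ((1 + p.1 ^ 2 + k ^ 2 * p.2 ^ 2)⁻¹) ^ 4)
        + (c4 * (p.1 ^ 2 * (p.2 ^ 2 * ((1 + p.1 ^ 2 + k ^ 2 * p.2 ^ 2)⁻¹) ^ 4))
        + (c5 * (p.2 ^ 2 * ((1 + p.1 ^ 2 + k ^ 2 * p.2 ^ 2)⁻¹) ^ 3)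
        + c6 * ((1 + p.1 ^ 2 + k ^ 2 * p.2 ^ 2)⁻¹) ^ 2))) :=
    (I3.const_mul c3).add J4
  have J2 : Integrable (fun p : ℝ × ℝ =>
      c2 * (p.1 ^ 2 * (p.2 ^ 4 * ((1 + p.1 ^ 2 + k ^ 2 * p.2 ^ 2)⁻¹) ^ 5))
        + (c3 * (p.2 ^ 4 * ((1 + p.1 ^ 2 + k ^ 2 * p.2 ^ 2)⁻¹) ^ 4)
        + (c4 * (p.1 ^ 2 * (p.2 ^ 2 * ((1 + p.1 ^ 2 + k ^ 2 * p.2 ^ 2)⁻¹) ^ 4))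
        + (c5 * (p.2 ^ 2 * ((1 + p.1 ^ 2 + k ^ 2 * p.2 ^ 2)⁻¹) ^ 3)
        + c6 * ((1 + p.1 ^ 2 + k ^ 2 * p.2 ^ 2)⁻¹) ^ 2)))) :=
    (I2.const_mul c2).add J3
  rw [integral_add (I1.const_mul c1) J2]
  rw [integral_add (I2.const_mul c2) J3]
  rw [integral_add (I3.const_mul c3) J4]
  rw [integral_add (I4.const_mul c4) J5]
  rw [integral_add (I5.const_mul c5) (I6.const_mul c6)]
  rw [MeasureTheory.integral_const_mul, MeasureTheory.integral_const_mul,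
    MeasureTheory.integral_const_mul, MeasureTheory.integral_const_mul,
    MeasureTheory.integral_const_mul, MeasureTheory.integral_const_mul]
  rw [T1, T2, T3, T4, T5, T6, hc1, hc2, hc3, hc4, hc5, hc6]
  field_simp
  ring
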